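/- Let χ be even and N = χ − 1. The 2-element subsets of [χ] can be partitioned into N classes U₁,...,U_N such that each class consists of χ/2 pairwise disjoint pairs (a perfect matching of [χ]) and every 2-element subset appears in exactly one class. -/

import Mathlib

set_option linter.unusedSectionVars false
set_option linter.unusedVariables false

namespace BaranyaiAux

variable {N : ℕ} [NeZero N]

/-- partner of a vertex in round `l` -/
def prt (l : ZMod N) : Option (ZMod N) → Option (ZMod N)
  | none => some l
  | some x => if x = l then none else some (2 * l - x)

def half : ZMod N := ((N + 1) / 2 : ℕ)

lemma half_mul_two (hodd : N % 2 = 1) : (2 : ZMod N) * half = 1 := by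
  have h2 : (N + 1) / 2 * 2 = N + 1 := Nat.div_mul_cancel (by omega)
  have h3 : ((((N+1)/2) * 2 : ℕ) : ZMod N) = ((N + 1 : ℕ) : ZMod N) := by rw [h2]
  push_cast at h3
  rw [ZMod.natCast_self] at h3
  simpa [half, mul_comm] using h3

lemma two_cancel (hodd : N % 2 = 1) {a b : ZMod N} (h : 2 * a = 2 * b) : a = b := by
  have := congrArg (half * ·) h
  simp only [← mul_assoc, mul_comm half 2, half_mul_two hodd, one_mul] at this
  exact this

lemma prt_invol (hodd : N % 2 = 1) (l : ZMod N) (v : Option (ZMod N)) :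
    prt l (prt l v) = v := by
  match v with
  | none => simp [prt]
  | some x =>
    by_cases h : x = l
    · simp [prt, h]
    · have h2 : 2 * l - x ≠ l := by
        intro he
        apply h
        apply two_cancel hodd
        have : 2 * l - x = l := he
        linear_combination (-2) * this
      simp [prt, h, h2]

lemma prt_ne (hodd : N % 2 = 1) (l : ZMod N) (v : Option (ZMod N)) :
    prt l v ≠ v := by
  match v with
  | none => simp [prt]
  | some x =>
    by_cases h : x = l
    · simp [prt, h]
    · simp only [prt, if_neg h, ne_eq, Option.some.injEq]
      intro he
      apply h
      apply two_cancel hodd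
      linear_combination -he

def M (l : ZMod N) : Finset (Finset (Option (ZMod N))) :=
  Finset.univ.image (fun v => {v, prt l v})

lemma card_of_mem_M (hodd : N % 2 = 1) {l : ZMod N} {e : Finset (Option (ZMod N))}
    (he : e ∈ M l) : e.card = 2 := by
  obtain ⟨v, -, rfl⟩ := Finset.mem_image.mp he
  rw [Finset.card_insert_of_notMem (by simpa using (prt_ne hodd l v).symm),
    Finset.card_singleton]

lemma disjoint_M (hodd : N % 2 = 1) {l : ZMod N} {e f : Finset (Option (ZMod N))}
    (he : e ∈ M l) (hf : f ∈ M l) (hne : e ≠ f) : Disjoint e f := by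
  obtain ⟨v, -, rfl⟩ := Finset.mem_image.mp he
  obtain ⟨w, -, rfl⟩ := Finset.mem_image.mp hf
  by_contra hd
  obtain ⟨x, hx1, hx2⟩ := Finset.not_disjoint_iff.mp hd
  simp only [Finset.mem_insert, Finset.mem_singleton] at hx1 hx2
  apply hne
  rcases hx1 with rfl | rfl
  · rcases hx2 with rfl | rfl
    · rfl
    · rw [prt_invol hodd, Finset.pair_comm]
  · rcases hx2 with h | h
    · rw [← h, prt_invol hodd, Finset.pair_comm]
    · have : v = w := by
        have := congrArg (prt l) h
        rwa [prt_invol hodd, prt_invol hodd] at this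
      rw [this]

lemma biUnion_M (hodd : N % 2 = 1) (l : ZMod N) :
    (M l).biUnion (fun e => e) = Finset.univ := by
  apply Finset.eq_univ_of_forall
  intro v
  have h1 : ({v, prt l v} : Finset (Option (ZMod N))) ∈ M l :=
    Finset.mem_image.mpr ⟨v, Finset.mem_univ v, rfl⟩
  exact Finset.mem_biUnion.mpr ⟨{v, prt l v}, h1, by simp⟩

lemma two_mul_card_M (hodd : N % 2 = 1) (l : ZMod N) :
    2 * (M l).card = N + 1 := by
  have h1 : ((M l).biUnion (fun e => e)).card = (Finset.univ : Finset (Option (ZMod N))).card := by rw [biUnion_M hodd]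
  rw [Finset.card_biUnion (fun e he f hf hne => disjoint_M hodd he hf hne)] at h1
  rw [Finset.sum_congr rfl (fun e he => card_of_mem_M hodd he)] at h1
  simp only [Finset.sum_const, smul_eq_mul, Finset.card_univ] at h1
  rw [mul_comm] at h1
  rw [h1]
  simp [ZMod.card]

lemma mem_M_iff (hodd : N % 2 = 1) {l : ZMod N} {a b : Option (ZMod N)} (hab : a ≠ b) :
    ({a, b} : Finset (Option (ZMod N))) ∈ M l ↔ prt l a = b := by
  constructor
  · intro h
    obtain ⟨v, -, hv⟩ := Finset.mem_image.mp h
    have ha : a = v ∨ a = prt l v := by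
      have : a ∈ ({v, prt l v} : Finset _) := hv ▸ (by simp)
      simpa using this
    have hb : b = v ∨ b = prt l v := by
      have : b ∈ ({v, prt l v} : Finset _) := hv ▸ (by simp)
      simpa using this
    rcases ha with rfl | rfl <;> rcases hb with rfl | rfl
    · exact absurd rfl hab
    · rfl
    · exact prt_invol hodd l _
    · exact absurd rfl hab
  · intro h
    exact Finset.mem_image.mpr ⟨a, Finset.mem_univ a, by rw [h]⟩

/-- the unique round containing a given pair -/
def cls : Option (ZMod N) → Option (ZMod N) → ZMod N
  | none, none => 0
  | none, some y => y
  | some x, none => x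
  | some x, some y => half * (x + y)

lemma prt_eq_iff (hodd : N % 2 = 1) {a b : Option (ZMod N)} (hab : a ≠ b) (l : ZMod N) :
    prt l a = b ↔ l = cls a b := by
  match a, b with
  | none, none => exact absurd rfl hab
  | none, some y => simp [prt, cls, eq_comm]
  | some x, none =>
    simp only [prt, cls]
    constructor
    · intro h
      by_contra hne
      rw [if_neg (fun hh => hne hh.symm)] at h
      exact Option.some_ne_none _ h
    · intro h; rw [if_pos h.symm]
  | some x, some y =>
    have hxy : x ≠ y := fun h => hab (by rw [h])
    simp only [prt, cls]
    constructor
    · intro h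
      by_cases hxl : x = l
      · rw [if_pos hxl] at h; exact absurd h.symm (Option.some_ne_none _)
      · rw [if_neg hxl] at h
        have h2 : 2 * l - x = y := Option.some.inj h
        have : 2 * l = 2 * (half * (x + y)) := by
          rw [← mul_assoc, half_mul_two hodd, one_mul]
          linear_combination h2
        exact two_cancel hodd this
    · intro h
      subst h
      have hxl : x ≠ half * (x + y) := by
        intro he
        apply hxy
        apply two_cancel hodd
        have := congrArg (2 * ·) he
        simp only [← mul_assoc, half_mul_two hodd, one_mul] at this
        linear_combination 2 * this
      rw [if_neg hxl]
      congr 1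
      have : (2 : ZMod N) * (half * (x + y)) = x + y := by
        rw [← mul_assoc, half_mul_two hodd, one_mul]
      linear_combination this

lemma existsUnique_M (hodd : N % 2 = 1) {e : Finset (Option (ZMod N))} (he : e.card = 2) :
    ∃! l : ZMod N, e ∈ M l := by
  obtain ⟨a, b, hab, rfl⟩ := Finset.card_eq_two.mp he
  refine ⟨cls a b, ?_, ?_⟩
  · show ({a, b} : Finset (Option (ZMod N))) ∈ M (cls a b)
    rw [mem_M_iff hodd hab, prt_eq_iff hodd hab]
  · intro l hl
    rw [mem_M_iff hodd hab, prt_eq_iff hodd hab] at hl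
    exact hl

end BaranyaiAux

open BaranyaiAux

/-- Baranyai's theorem for `h = 2`: for even `χ`, the 2-element subsets of `[χ]` can be
partitioned into `χ - 1` classes, each class being a perfect matching of `[χ]`
(`χ/2` pairwise disjoint pairs), with every pair appearing in exactly one class. -/
theorem baranyai_pairs (χ : ℕ) (heven : Even χ) (hpos : 2 ≤ χ) :
    ∃ U : Fin (χ - 1) → Finset (Finset (Fin χ)),
      (∀ l, ∀ e ∈ U l, e.card = 2) ∧
      (∀ l, (U l).card = χ / 2) ∧
      (∀ l, ∀ e ∈ U l, ∀ f ∈ U l, e ≠ f → Disjoint e f) ∧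
      (∀ e : Finset (Fin χ), e.card = 2 → ∃! l, e ∈ U l) := by
  classical
  set N := χ - 1 with hNdef
  have hN0 : N ≠ 0 := by omega
  haveI : NeZero N := ⟨hN0⟩
  have hodd : N % 2 = 1 := by obtain ⟨m, hm⟩ := heven; omega
  have hχ : χ = N + 1 := by omega
  have hcard : Fintype.card (Option (ZMod N)) = Fintype.card (Fin χ) := by
    simp [ZMod.card, hχ]
  let f : Option (ZMod N) ≃ Fin χ := Fintype.equivOfCardEq hcard
  have hcard2 : Fintype.card (Fin (χ - 1)) = Fintype.card (ZMod N) := by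
    simp [ZMod.card, hNdef]
  let τ : Fin (χ - 1) ≃ ZMod N := Fintype.equivOfCardEq hcard2
  let emb : Finset (Option (ZMod N)) ↪ Finset (Fin χ) :=
    (Finset.mapEmbedding f.toEmbedding).toEmbedding
  refine ⟨fun l => (M (τ l)).map emb, ?_, ?_, ?_, ?_⟩
  · intro l e he
    obtain ⟨e', he', rfl⟩ := Finset.mem_map.mp he
    rw [show emb e' = e'.map f.toEmbedding from rfl, Finset.card_map]
    exact card_of_mem_M hodd he'
  · intro l
    rw [Finset.card_map]
    have := two_mul_card_M hodd (τ l)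
    omega
  · intro l e he g hg hne
    obtain ⟨e', he', rfl⟩ := Finset.mem_map.mp he
    obtain ⟨g', hg', rfl⟩ := Finset.mem_map.mp hg
    have hne' : e' ≠ g' := fun h => hne (by rw [h])
    have hd := disjoint_M hodd he' hg' hne'
    rw [show emb e' = e'.map f.toEmbedding from rfl,
      show emb g' = g'.map f.toEmbedding from rfl]
    exact Finset.disjoint_map _ |>.mpr hd
  · intro e he
    set e' : Finset (Option (ZMod N)) := e.map f.symm.toEmbedding with he'def
    have he' : e'.card = 2 := by rw [he'def, Finset.card_map, he]
    have hembe : emb e' = e := by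
      rw [show emb e' = e'.map f.toEmbedding from rfl, he'def, Finset.map_map]
      convert Finset.map_refl
      ext x
      simp
    have hmem : ∀ z : ZMod N, e ∈ (M z).map emb ↔ e' ∈ M z := by
      intro z
      constructor
      · intro h
        obtain ⟨a, ha, hae⟩ := Finset.mem_map.mp h
        have : a = e' := emb.injective (by rw [hae, hembe])
        rwa [← this]
      · intro h
        exact Finset.mem_map.mpr ⟨e', h, hembe⟩
    obtain ⟨z, hz, hzu⟩ := existsUnique_M hodd he'
    refine ⟨τ.symm z, ?_, ?_⟩
    · show e ∈ (M (τ (τ.symm z))).map emb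
      rw [τ.apply_symm_apply]
      exact (hmem z).mpr hz
    · intro l hl
      have hl' : e ∈ (M (τ l)).map emb := hl
      have := hzu _ ((hmem (τ l)).mp hl')
      rw [← this, τ.symm_apply_apply]
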